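/- Let 0 < λ_1 < λ_2 < ... < λ_N be real numbers (N ≥ 2) and let p_0 = (p_{1,0}, ..., p_{N,0}) be a probability vector (p_{i,0} ≥ 0, Σ_i p_{i,0} = 1) with p_{1,0} > 0 and p_{N,0} > 0. Define the sequence of probability vectors p_n by the transformation p_{i,n+1} = ((Σ_{j=1}^N λ_j p_{j,n} − λ_i)^2 / Σ_{l=1}^N (Σ_{j=1}^N λ_j p_{j,n} − λ_l)^2 p_{l,n}) · p_{i,n}. Then there exists p_* ∈ (0,1) such that: lim_{n→∞} p_{i,2n} = p_* if i = 1, = 0 if 2 ≤ i ≤ N−1, and = 1 − p_* if i = N; and lim_{n→∞} p_{i,2n+1} = 1 − p_* if i = 1, = 0 if 2 ≤ i ≤ N−1, and = p_* if i = N. -/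

import Mathlib

open Filter Topology

set_option maxHeartbeats 1600000 in
/-- Akaike-type transformation lemma: the probability measure transformation
`p_{i,n+1} = ((Σ_j λ_j p_{j,n} − λ_i)² / Σ_l (Σ_j λ_j p_{j,n} − λ_l)² p_{l,n}) p_{i,n}`
concentrates, alternately in `n`, on the two extreme points `λ_1` and `λ_N`. -/
theorem akaike_transformation
    (N : ℕ) (hN : 2 ≤ N)
    (lam : Fin N → ℝ)
    (hlam0 : 0 < lam ⟨0, by omega⟩)
    (hmono : StrictMono lam)
    (p : ℕ → Fin N → ℝ)
    (hp_nonneg : ∀ i, 0 ≤ p 0 i)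
    (hp_sum : ∑ i, p 0 i = 1)
    (hp1 : 0 < p 0 ⟨0, by omega⟩)
    (hpN : 0 < p 0 ⟨N - 1, by omega⟩)
    (hrec : ∀ n i, p (n + 1) i =
      ((∑ j, lam j * p n j) - lam i) ^ 2 /
        (∑ l, ((∑ j, lam j * p n j) - lam l) ^ 2 * p n l) * p n i) :
    ∃ pstar : ℝ, pstar ∈ Set.Ioo (0 : ℝ) 1 ∧
      Tendsto (fun n => p (2 * n) ⟨0, by omega⟩) atTop (𝓝 pstar) ∧
      (∀ i : Fin N, 0 < i.1 → i.1 < N - 1 →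
        Tendsto (fun n => p (2 * n) i) atTop (𝓝 0)) ∧
      Tendsto (fun n => p (2 * n) ⟨N - 1, by omega⟩) atTop (𝓝 (1 - pstar)) ∧
      Tendsto (fun n => p (2 * n + 1) ⟨0, by omega⟩) atTop (𝓝 (1 - pstar)) ∧
      (∀ i : Fin N, 0 < i.1 → i.1 < N - 1 →
        Tendsto (fun n => p (2 * n + 1) i) atTop (𝓝 0)) ∧
      Tendsto (fun n => p (2 * n + 1) ⟨N - 1, by omega⟩) atTop (𝓝 pstar) := by
  classical
  have hN0 : (0 : ℕ) < N := by omega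
  have hN1 : N - 1 < N := by omega
  set i0 : Fin N := ⟨0, hN0⟩ with hi0def
  set iN : Fin N := ⟨N - 1, hN1⟩ with hiNdef
  have hi0val : i0.1 = 0 := rfl
  have hiNval : iN.1 = N - 1 := rfl
  have hne : i0 ≠ iN := by
    intro h
    have := congrArg Fin.val h
    rw [hi0val, hiNval] at this; omega
  have hl0 : ∀ l, lam i0 ≤ lam l := fun l =>
    hmono.monotone (by rw [Fin.le_def, hi0val]; omega)
  have hlN : ∀ l, lam l ≤ lam iN := fun l =>
    hmono.monotone (by rw [Fin.le_def, hiNval]; have := l.2; omega)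
  set Δ : ℝ := lam iN - lam i0 with hΔdef
  have hΔpos : 0 < Δ :=
    sub_pos.2 (hmono (by rw [Fin.lt_def, hi0val, hiNval]; omega))
  set m : ℕ → ℝ := fun n => ∑ j, lam j * p n j with hm
  set D : ℕ → ℝ := fun n => ∑ l, (m n - lam l) ^ 2 * p n l with hD
  have hrec' : ∀ n i, p (n + 1) i = (m n - lam i) ^ 2 / D n * p n i := hrec
  -- basic sum identities given total mass 1
  have esum1 : ∀ (k : ℕ), (∑ i, p k i = 1) → ∀ c : ℝ,
      ∑ l, (lam l - c) * p k l = m k - c := by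
    intro k hs c
    have h1 : ∑ l, (lam l - c) * p k l
        = (∑ l, lam l * p k l) - c * ∑ l, p k l := by
      rw [Finset.mul_sum, ← Finset.sum_sub_distrib]
      exact Finset.sum_congr rfl fun l _ => by ring
    rw [h1, hs, mul_one]
  have esum2 : ∀ (k : ℕ), (∑ i, p k i = 1) → ∀ c : ℝ,
      ∑ l, (c - lam l) * p k l = c - m k := by
    intro k hs c
    have h1 : ∑ l, (c - lam l) * p k l
        = c * (∑ l, p k l) - ∑ l, lam l * p k l := by
      rw [Finset.mul_sum, ← Finset.sum_sub_distrib]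
      exact Finset.sum_congr rfl fun l _ => by ring
    rw [h1, hs, mul_one]
  have core : ∀ k, (∀ i, 0 ≤ p k i) → (∑ i, p k i = 1) → 0 < p k i0 → 0 < p k iN →
      0 < m k - lam i0 ∧ 0 < lam iN - m k ∧ 0 < D k := by
    intro k h1 h2 h3 h4
    have hmlb : 0 < m k - lam i0 := by
      rw [← esum1 k h2 (lam i0)]
      calc (0:ℝ) < Δ * p k iN := mul_pos hΔpos h4
        _ = (lam iN - lam i0) * p k iN := by rw [hΔdef]
        _ ≤ ∑ l, (lam l - lam i0) * p k l :=
            Finset.single_le_sum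
              (fun l _ => mul_nonneg (sub_nonneg.2 (hl0 l)) (h1 l))
              (Finset.mem_univ iN)
    have hmub : 0 < lam iN - m k := by
      rw [← esum2 k h2 (lam iN)]
      calc (0:ℝ) < Δ * p k i0 := mul_pos hΔpos h3
        _ = (lam iN - lam i0) * p k i0 := by rw [hΔdef]
        _ ≤ ∑ l, (lam iN - lam l) * p k l :=
            Finset.single_le_sum
              (fun l _ => mul_nonneg (sub_nonneg.2 (hlN l)) (h1 l))
              (Finset.mem_univ i0)
    refine ⟨hmlb, hmub, ?_⟩
    calc (0:ℝ) < (m k - lam i0) ^ 2 * p k i0 := mul_pos (pow_pos hmlb 2) h3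
      _ ≤ ∑ l, (m k - lam l) ^ 2 * p k l :=
          Finset.single_le_sum (f := fun l => (m k - lam l) ^ 2 * p k l)
            (fun l _ => mul_nonneg (sq_nonneg _) (h1 l)) (Finset.mem_univ i0)
  have inv : ∀ n, (∀ i, 0 ≤ p n i) ∧ (∑ i, p n i = 1) ∧ 0 < p n i0 ∧ 0 < p n iN := by
    intro n
    induction n with
    | zero => exact ⟨hp_nonneg, hp_sum, hp1, hpN⟩
    | succ k ih =>
      obtain ⟨h1, h2, h3, h4⟩ := ih
      obtain ⟨hmlb, hmub, hDpos⟩ := core k h1 h2 h3 h4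
      refine ⟨?_, ?_, ?_, ?_⟩
      · intro i
        rw [hrec' k i]
        exact mul_nonneg (div_nonneg (sq_nonneg _) hDpos.le) (h1 i)
      · calc ∑ i, p (k+1) i = (∑ i, (m k - lam i) ^ 2 * p k i) / D k := by
              rw [Finset.sum_div]
              exact Finset.sum_congr rfl fun i _ => by rw [hrec' k i]; ring
          _ = 1 := div_self (ne_of_gt hDpos)
      · rw [hrec' k i0]
        exact mul_pos (div_pos (pow_pos hmlb 2) hDpos) h3
      · rw [hrec' k iN]
        have hsq : 0 < (m k - lam iN) ^ 2 := by nlinarith [hmub]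
        exact mul_pos (div_pos hsq hDpos) h4
  have hpos : ∀ n i, 0 ≤ p n i := fun n => (inv n).1
  have hsum1 : ∀ n, ∑ i, p n i = 1 := fun n => (inv n).2.1
  have hx : ∀ n, 0 < p n i0 := fun n => (inv n).2.2.1
  have hy : ∀ n, 0 < p n iN := fun n => (inv n).2.2.2
  have hple : ∀ n i, p n i ≤ 1 := by
    intro n i
    rw [← hsum1 n]
    exact Finset.single_le_sum (fun l _ => hpos n l) (Finset.mem_univ i)
  have hmlb : ∀ n, 0 < m n - lam i0 := fun n =>
    (core n (hpos n) (hsum1 n) (hx n) (hy n)).1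
  have hmub : ∀ n, 0 < lam iN - m n := fun n =>
    (core n (hpos n) (hsum1 n) (hx n) (hy n)).2.1
  have hDpos : ∀ n, 0 < D n := fun n =>
    (core n (hpos n) (hsum1 n) (hx n) (hy n)).2.2
  -- Bhatia--Davis identity
  set S : ℕ → ℝ := fun n => (m n - lam i0) * (lam iN - m n) with hS
  set G : ℕ → ℝ := fun n => ∑ l, (lam l - lam i0) * (lam iN - lam l) * p n l with hG
  have hGnonneg : ∀ n, 0 ≤ G n := fun n =>
    Finset.sum_nonneg fun l _ =>
      mul_nonneg (mul_nonneg (sub_nonneg.2 (hl0 l)) (sub_nonneg.2 (hlN l))) (hpos n l)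
  have hzero : ∀ n, ∑ l, (m n - lam l) * p n l = 0 := by
    intro n
    rw [esum2 n (hsum1 n) (m n)]
    exact sub_self _
  have hSDG : ∀ n, S n = D n + G n := by
    intro n
    have h0 := hzero n
    have hs := hsum1 n
    calc S n = ∑ l, (m n - lam i0) * (lam iN - m n) * p n l := by
          rw [← Finset.mul_sum, hs, mul_one]
      _ = ∑ l, ((m n - lam l) ^ 2 * p n l
            + (lam l - lam i0) * (lam iN - lam l) * p n l
            + (lam i0 + lam iN - 2 * m n) * ((m n - lam l) * p n l)) :=
          Finset.sum_congr rfl fun l _ => by ring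
      _ = (∑ l, (m n - lam l) ^ 2 * p n l)
            + (∑ l, (lam l - lam i0) * (lam iN - lam l) * p n l)
            + (lam i0 + lam iN - 2 * m n) * ∑ l, (m n - lam l) * p n l := by
          rw [Finset.sum_add_distrib, Finset.sum_add_distrib, ← Finset.mul_sum]
      _ = D n + G n := by rw [h0]; simp only [hD, hG]; ring
  have hDleS : ∀ n, D n ≤ S n := fun n => by have := hSDG n; linarith [hGnonneg n]
  have hSle : ∀ n, S n ≤ Δ ^ 2 := by
    intro n
    have h1 : m n - lam i0 ≤ Δ := by rw [hΔdef]; linarith [hmub n]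
    have h2 : lam iN - m n ≤ Δ := by rw [hΔdef]; linarith [hmlb n]
    have : S n = (m n - lam i0) * (lam iN - m n) := rfl
    nlinarith [hmlb n, hmub n]
  -- the product of extreme masses is monotone
  set V : ℕ → ℝ := fun n => p n i0 * p n iN with hV
  have hVpos : ∀ n, 0 < V n := fun n => mul_pos (hx n) (hy n)
  have hVrec : ∀ n, V (n+1) = (S n / D n) ^ 2 * V n := by
    intro n
    have hDne : D n ≠ 0 := ne_of_gt (hDpos n)
    simp only [hV, hS]
    rw [hrec' n i0, hrec' n iN]
    field_simp
    ring
  have hVmono : Monotone V := by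
    apply monotone_nat_of_le_succ
    intro n
    have h := hVrec n
    have h1 : 1 ≤ S n / D n := (one_le_div (hDpos n)).2 (hDleS n)
    have h2 : 1 ≤ (S n / D n) ^ 2 := by nlinarith
    calc V n = 1 * V n := (one_mul _).symm
      _ ≤ (S n / D n) ^ 2 * V n := mul_le_mul_of_nonneg_right h2 (hVpos n).le
      _ = V (n+1) := (hVrec n).symm
  have hVle4 : ∀ n, V n ≤ 1/4 := by
    intro n
    have hσle : p n i0 + p n iN ≤ 1 := by
      have h := Finset.sum_le_sum_of_subset_of_nonneg
        (Finset.subset_univ ({i0, iN} : Finset (Fin N))) (fun i _ _ => hpos n i)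
      rw [Finset.sum_pair hne, hsum1 n] at h
      exact h
    have : V n = p n i0 * p n iN := rfl
    nlinarith [sq_nonneg (p n i0 - p n iN), hpos n i0, hpos n iN]
  have hbdd : BddAbove (Set.range V) := ⟨1/4, by rintro _ ⟨n, rfl⟩; exact hVle4 n⟩
  have hVtend : Tendsto V atTop (𝓝 (⨆ n, V n)) := tendsto_atTop_ciSup hVmono hbdd
  set Vinf : ℝ := ⨆ n, V n with hVinfdef
  have hVinfpos : 0 < Vinf := lt_of_lt_of_le (hVpos 0) (le_ciSup hbdd 0)
  have hVinfle : Vinf ≤ 1/4 := ciSup_le hVle4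
  have hrat2 : Tendsto (fun n => (S n / D n) ^ 2) atTop (𝓝 1) := by
    have h1 : Tendsto (fun n => V (n+1)) atTop (𝓝 Vinf) :=
      hVtend.comp (tendsto_add_atTop_nat 1)
    have h2 : Tendsto (fun n => V (n+1) / V n) atTop (𝓝 (Vinf / Vinf)) :=
      h1.div hVtend (ne_of_gt hVinfpos)
    rw [div_self (ne_of_gt hVinfpos)] at h2
    have h3 : (fun n => (S n / D n) ^ 2) = fun n => V (n+1) / V n := by
      funext n
      have hVne : V n ≠ 0 := ne_of_gt (hVpos n)
      rw [hVrec n]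
      exact (mul_div_cancel_right₀ _ hVne).symm
    rw [h3]; exact h2
  have hSD1 : Tendsto (fun n => S n / D n) atTop (𝓝 1) := by
    have hle1 : ∀ n, 1 ≤ S n / D n := fun n => (one_le_div (hDpos n)).2 (hDleS n)
    refine tendsto_of_tendsto_of_tendsto_of_le_of_le tendsto_const_nhds hrat2 hle1
      (fun n => le_self_pow₀ (hle1 n) two_ne_zero)
  have hG0 : Tendsto G atTop (𝓝 0) := by
    have hb : ∀ n, G n ≤ Δ ^ 2 * (S n / D n - 1) := by
      intro n
      have h1 : G n = D n * (S n / D n - 1) := by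
        rw [mul_sub, mul_one, mul_div_cancel₀ _ (ne_of_gt (hDpos n))]
        linarith [hSDG n]
      rw [h1]
      have h2 : 0 ≤ S n / D n - 1 := by linarith [(one_le_div (hDpos n)).2 (hDleS n)]
      have h3 : D n ≤ Δ ^ 2 := le_trans (hDleS n) (hSle n)
      exact mul_le_mul_of_nonneg_right h3 h2
    have hrhs : Tendsto (fun n => Δ ^ 2 * (S n / D n - 1)) atTop (𝓝 0) := by
      have := ((hSD1.sub_const 1).const_mul (Δ ^ 2))
      simpa using this
    exact tendsto_of_tendsto_of_tendsto_of_le_of_le tendsto_const_nhds hrhs hGnonneg hb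
  -- interior masses die
  have hint : ∀ i : Fin N, i ≠ i0 → i ≠ iN → Tendsto (fun n => p n i) atTop (𝓝 0) := by
    intro i hA hB
    have hc1 : 0 < lam i - lam i0 := by
      refine sub_pos.2 (hmono ?_)
      rw [Fin.lt_def, hi0val]
      rcases Nat.eq_zero_or_pos i.1 with h | h
      · exact absurd (Fin.ext (by rw [h, hi0val])) hA
      · exact h
    have hc2 : 0 < lam iN - lam i := by
      refine sub_pos.2 (hmono ?_)
      rw [Fin.lt_def, hiNval]
      have h2 := i.2
      rcases Nat.lt_or_ge i.1 (N-1) with h | h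
      · exact h
      · exact absurd (Fin.ext (by rw [hiNval]; omega)) hB
    have hcpos : 0 < (lam i - lam i0) * (lam iN - lam i) := mul_pos hc1 hc2
    have hub : ∀ n, p n i ≤ G n / ((lam i - lam i0) * (lam iN - lam i)) := by
      intro n
      rw [le_div_iff₀ hcpos]
      calc p n i * ((lam i - lam i0) * (lam iN - lam i))
          = (lam i - lam i0) * (lam iN - lam i) * p n i := by ring
        _ ≤ G n := Finset.single_le_sum
            (fun l _ => mul_nonneg
              (mul_nonneg (sub_nonneg.2 (hl0 l)) (sub_nonneg.2 (hlN l))) (hpos n l))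
            (Finset.mem_univ i)
    have hdiv : Tendsto (fun n => G n / ((lam i - lam i0) * (lam iN - lam i)))
        atTop (𝓝 0) := by
      simpa using hG0.div_const ((lam i - lam i0) * (lam iN - lam i))
    exact tendsto_of_tendsto_of_tendsto_of_le_of_le tendsto_const_nhds hdiv
      (fun n => hpos n i) hub
  -- interior index set
  set Int : Finset (Fin N) := Finset.univ \ {i0, iN} with hIntdef
  have hsplit : ∀ f : Fin N → ℝ, ∑ l, f l = f i0 + f iN + ∑ l ∈ Int, f l := by
    intro f
    have h2 := Finset.sum_sdiff (f := f) (Finset.subset_univ ({i0, iN} : Finset (Fin N)))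
    rw [Finset.sum_pair hne] at h2
    simp only [hIntdef]
    linarith
  have hmemInt : ∀ l ∈ Int, l ≠ i0 ∧ l ≠ iN := by
    intro l hl
    simp only [hIntdef, Finset.mem_sdiff, Finset.mem_insert, Finset.mem_singleton] at hl
    exact ⟨fun h => hl.2 (Or.inl h), fun h => hl.2 (Or.inr h)⟩
  set ε : ℕ → ℝ := fun n => ∑ l ∈ Int, p n l with hεdef
  have hεnonneg : ∀ n, 0 ≤ ε n := fun n => Finset.sum_nonneg fun l _ => hpos n l
  have hε0 : Tendsto ε atTop (𝓝 0) := by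
    have h := tendsto_finset_sum Int
      (f := fun l n => p n l) (a := fun _ => (0:ℝ))
      (fun l hl => hint l (hmemInt l hl).1 (hmemInt l hl).2)
    simpa using h
  have hσ : ∀ n, p n i0 + p n iN = 1 - ε n := by
    intro n
    have h := hsplit (p n)
    rw [hsum1 n] at h
    simp only [hεdef]
    linarith
  -- decomposition of the mean
  set a : ℕ → ℝ := fun n => ∑ l ∈ Int, (lam l - lam i0) * p n l with hadef
  set b : ℕ → ℝ := fun n => ∑ l ∈ Int, (lam iN - lam l) * p n l with hbdef
  have hma : ∀ n, m n - lam i0 = Δ * p n iN + a n := by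
    intro n
    rw [← esum1 n (hsum1 n) (lam i0), hsplit (fun l => (lam l - lam i0) * p n l)]
    simp only [hadef, hΔdef]
    ring
  have hmb : ∀ n, lam iN - m n = Δ * p n i0 + b n := by
    intro n
    rw [← esum2 n (hsum1 n) (lam iN), hsplit (fun l => (lam iN - lam l) * p n l)]
    simp only [hbdef, hΔdef]
    ring
  have hanonneg : ∀ n, 0 ≤ a n := fun n =>
    Finset.sum_nonneg fun l _ => mul_nonneg (sub_nonneg.2 (hl0 l)) (hpos n l)
  have hbnonneg : ∀ n, 0 ≤ b n := fun n =>
    Finset.sum_nonneg fun l _ => mul_nonneg (sub_nonneg.2 (hlN l)) (hpos n l)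
  have hale : ∀ n, a n ≤ Δ * ε n := by
    intro n
    simp only [hadef, hεdef, Finset.mul_sum]
    refine Finset.sum_le_sum fun l _ => ?_
    refine mul_le_mul_of_nonneg_right ?_ (hpos n l)
    rw [hΔdef]; linarith [hlN l, hl0 l]
  have hble : ∀ n, b n ≤ Δ * ε n := by
    intro n
    simp only [hbdef, hεdef, Finset.mul_sum]
    refine Finset.sum_le_sum fun l _ => ?_
    refine mul_le_mul_of_nonneg_right ?_ (hpos n l)
    rw [hΔdef]; linarith [hlN l, hl0 l]
  have ha0 : Tendsto a atTop (𝓝 0) := by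
    refine tendsto_of_tendsto_of_tendsto_of_le_of_le tendsto_const_nhds
      (h := fun n => Δ * ε n) ?_ hanonneg hale
    simpa using hε0.const_mul Δ
  have hb0 : Tendsto b atTop (𝓝 0) := by
    refine tendsto_of_tendsto_of_tendsto_of_le_of_le tendsto_const_nhds
      (h := fun n => Δ * ε n) ?_ hbnonneg hble
    simpa using hε0.const_mul Δ
  -- D is close to Δ² V
  set δ : ℕ → ℝ := fun n => D n - Δ ^ 2 * V n with hδdef
  have hδeq : ∀ n, δ n = Δ * p n iN * b n + Δ * p n i0 * a n + a n * b n - G n := by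
    intro n
    have h1 := hma n
    have h2 := hmb n
    have h3 := hSDG n
    have h4 : S n = (Δ * p n iN + a n) * (Δ * p n i0 + b n) := by
      have : S n = (m n - lam i0) * (lam iN - m n) := rfl
      rw [this, h1, h2]
    have h5 : δ n = D n - Δ ^ 2 * (p n i0 * p n iN) := rfl
    have h6 : D n = S n - G n := by linarith
    rw [h5, h6, h4]; ring
  have hδ0 : Tendsto δ atTop (𝓝 0) := by
    have t1 : Tendsto (fun n => Δ * p n iN * b n) atTop (𝓝 0) := by
      refine squeeze_zero_norm (a := fun n => Δ * b n) (fun n => ?_)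
        (by simpa using hb0.const_mul Δ)
      show ‖Δ * p n iN * b n‖ ≤ Δ * b n
      rw [Real.norm_eq_abs, abs_of_nonneg
        (mul_nonneg (mul_nonneg hΔpos.le (hpos n iN)) (hbnonneg n))]
      nlinarith [mul_nonneg (mul_nonneg hΔpos.le (hbnonneg n)) (sub_nonneg.2 (hple n iN))]
    have t2 : Tendsto (fun n => Δ * p n i0 * a n) atTop (𝓝 0) := by
      refine squeeze_zero_norm (a := fun n => Δ * a n) (fun n => ?_)
        (by simpa using ha0.const_mul Δ)
      show ‖Δ * p n i0 * a n‖ ≤ Δ * a n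
      rw [Real.norm_eq_abs, abs_of_nonneg
        (mul_nonneg (mul_nonneg hΔpos.le (hpos n i0)) (hanonneg n))]
      nlinarith [mul_nonneg (mul_nonneg hΔpos.le (hanonneg n)) (sub_nonneg.2 (hple n i0))]
    have t3 : Tendsto (fun n => a n * b n) atTop (𝓝 0) := by
      have h := ha0.mul hb0
      rw [mul_zero] at h
      exact h
    have hfe : δ = fun n => (Δ * p n iN * b n + Δ * p n i0 * a n + a n * b n) - G n := by
      funext n
      rw [hδeq n]
    rw [hfe]
    simpa using ((t1.add t2).add t3).sub hG0
  have hc0pos : 0 < Δ ^ 2 * V 0 / 2 :=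
    div_pos (mul_pos (pow_pos hΔpos 2) (hVpos 0)) two_pos
  have hDlb : ∀ᶠ n in atTop, Δ ^ 2 * V 0 / 2 ≤ D n := by
    have h1 : ∀ᶠ n in atTop, -(Δ ^ 2 * V 0 / 2) < δ n :=
      hδ0.eventually (lt_mem_nhds (by linarith))
    filter_upwards [h1] with n hn
    have h2 : Δ ^ 2 * V 0 ≤ Δ ^ 2 * V n :=
      mul_le_mul_of_nonneg_left (hVmono (Nat.zero_le n)) (sq_nonneg Δ)
    have h3 : δ n = D n - Δ ^ 2 * V n := rfl
    rw [h3] at hn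
    generalize hA : Δ ^ 2 * V 0 = A at hn h2 ⊢
    generalize hB : Δ ^ 2 * V n = B at hn h2 ⊢
    linarith [hn, h2]
  -- the swap estimate
  have hw : Tendsto (fun n => p (n+1) i0 - p n iN) atTop (𝓝 0) := by
    set η : ℕ → ℝ := fun n =>
      2 * Δ * p n iN * a n * p n i0 + (a n) ^ 2 * p n i0 - p n iN * δ n with hηdef
    have hid : ∀ n, p (n+1) i0 - p n iN = η n / D n := by
      intro n
      have hDne : D n ≠ 0 := ne_of_gt (hDpos n)
      rw [hrec' n i0, eq_div_iff hDne]
      have h1 := hma n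
      have h2 : D n = Δ ^ 2 * (p n i0 * p n iN) + δ n := by
        have h3 : δ n = D n - Δ ^ 2 * (p n i0 * p n iN) := rfl
        linarith
      have h4 : η n = 2 * Δ * p n iN * a n * p n i0 + (a n) ^ 2 * p n i0
          - p n iN * δ n := rfl
      calc ((m n - lam i0) ^ 2 / D n * p n i0 - p n iN) * D n
          = (m n - lam i0) ^ 2 * p n i0 - p n iN * D n := by
            field_simp
        _ = η n := by
            rw [h1, h2, h4]
            ring
    have hη0 : Tendsto η atTop (𝓝 0) := by
      have t1 : Tendsto (fun n => 2 * Δ * p n iN * a n * p n i0) atTop (𝓝 0) := by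
        refine squeeze_zero_norm (a := fun n => 2 * Δ * a n) (fun n => ?_)
          (by simpa using ha0.const_mul (2 * Δ))
        show ‖2 * Δ * p n iN * a n * p n i0‖ ≤ 2 * Δ * a n
        rw [Real.norm_eq_abs, abs_of_nonneg (mul_nonneg (mul_nonneg (mul_nonneg (mul_nonneg (by norm_num : (0:ℝ) ≤ 2) hΔpos.le) (hpos n iN)) (hanonneg n)) (hpos n i0))]
        have hprod : p n iN * p n i0 ≤ 1 := by
          nlinarith [hple n iN, hple n i0, hpos n iN, hpos n i0]
        nlinarith [mul_nonneg (mul_nonneg hΔpos.le (hanonneg n)) (sub_nonneg.2 hprod)]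
      have t2 : Tendsto (fun n => (a n) ^ 2 * p n i0) atTop (𝓝 0) := by
        refine squeeze_zero_norm (a := fun n => (a n) ^ 2) (fun n => ?_) ?_
        · show ‖(a n) ^ 2 * p n i0‖ ≤ (a n) ^ 2
          rw [Real.norm_eq_abs, abs_of_nonneg (mul_nonneg (sq_nonneg _) (hpos n i0))]
          nlinarith [mul_nonneg (sq_nonneg (a n)) (sub_nonneg.2 (hple n i0))]
        · have := ha0.pow 2
          simpa using this
      have t3 : Tendsto (fun n => p n iN * δ n) atTop (𝓝 0) := by
        refine squeeze_zero_norm (a := fun n => |δ n|) (fun n => ?_) ?_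
        · show ‖p n iN * δ n‖ ≤ |δ n|
          rw [Real.norm_eq_abs, abs_mul]
          have := abs_nonneg (δ n)
          rw [abs_of_nonneg (hpos n iN)]
          nlinarith [mul_nonneg (abs_nonneg (δ n)) (sub_nonneg.2 (hple n iN))]
        · have := hδ0.abs
          simpa using this
      have hfe : η = fun n =>
          (2 * Δ * p n iN * a n * p n i0 + (a n) ^ 2 * p n i0) - p n iN * δ n := by
        funext n; rfl
      rw [hfe]
      simpa using (t1.add t2).sub t3
    refine squeeze_zero_norm' ?_ ((by simpa using (hη0.abs.div_const (Δ ^ 2 * V 0 / 2))) :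
      Tendsto (fun n => |η n| / (Δ ^ 2 * V 0 / 2)) atTop (𝓝 0))
    filter_upwards [hDlb] with n hn
    rw [hid n, Real.norm_eq_abs, abs_div, abs_of_pos (hDpos n)]
    exact div_le_div_of_nonneg_left (abs_nonneg _) hc0pos hn
  -- swap in terms of the first coordinate only
  have he : Tendsto (fun n => p (n+1) i0 - (1 - p n i0)) atTop (𝓝 0) := by
    have hfe : (fun n => p (n+1) i0 - (1 - p n i0))
        = fun n => (p (n+1) i0 - p n iN) - ε n := by
      funext n
      have := hσ n
      linarith
    rw [hfe]
    simpa using hw.sub hε0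
  -- limiting roots
  set ρ : ℝ := Real.sqrt (1 - 4 * Vinf) with hρdef
  have hρnn : 0 ≤ ρ := Real.sqrt_nonneg _
  have hρsq : ρ ^ 2 = 1 - 4 * Vinf := Real.sq_sqrt (by linarith)
  have hρlt1 : ρ < 1 := by nlinarith
  set α : ℝ := (1 - ρ) / 2 with hαdef
  set β : ℝ := (1 + ρ) / 2 with hβdef
  have hαpos : 0 < α := by rw [hαdef]; linarith
  have hβlt1 : β < 1 := by rw [hβdef]; linarith
  have hαβ1 : α + β = 1 := by rw [hαdef, hβdef]; ring
  have hαβV : α * β = Vinf := by rw [hαdef, hβdef]; nlinarith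
  have hq : Tendsto (fun n => (p n i0 - α) * (p n i0 - β)) atTop (𝓝 0) := by
    have hfe : (fun n => (p n i0 - α) * (p n i0 - β))
        = fun n => (Vinf - V n) - ε n * p n i0 := by
      funext n
      have h1 := hσ n
      have h2 : V n = p n i0 * p n iN := rfl
      rw [h2]
      linear_combination (p n i0) * h1 + hαβV - (p n i0) * hαβ1
    rw [hfe]
    have t1 : Tendsto (fun n => Vinf - V n) atTop (𝓝 0) := by
      simpa using (tendsto_const_nhds (α := ℕ) (x := Vinf)).sub hVtend
    have t2 : Tendsto (fun n => ε n * p n i0) atTop (𝓝 0) := by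
      refine squeeze_zero_norm (a := fun n => ε n) (fun n => ?_) hε0
      show ‖ε n * p n i0‖ ≤ ε n
      rw [Real.norm_eq_abs, abs_of_nonneg (mul_nonneg (hεnonneg n) (hpos n i0))]
      nlinarith [mul_nonneg (hεnonneg n) (sub_nonneg.2 (hple n i0))]
    simpa using t1.sub t2
  have h2n : Tendsto (fun n : ℕ => 2 * n) atTop atTop := by
    have hle : ∀ n : ℕ, n ≤ 2 * n := fun n => by omega
    exact tendsto_atTop_mono hle tendsto_id
  have h2n1 : Tendsto (fun n : ℕ => 2 * n + 1) atTop atTop := by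
    have hle : ∀ n : ℕ, n ≤ 2 * n + 1 := fun n => by omega
    exact tendsto_atTop_mono hle tendsto_id
  -- reduce to convergence of the even subsequence of the first coordinate
  suffices h : ∃ c : ℝ, c ∈ Set.Ioo (0:ℝ) 1 ∧
      Tendsto (fun n => p (2 * n) i0) atTop (𝓝 c) by
    obtain ⟨c, hc, hxc⟩ := h
    have hεeven : Tendsto (fun n => ε (2 * n)) atTop (𝓝 0) := hε0.comp h2n
    have hεodd : Tendsto (fun n => ε (2 * n + 1)) atTop (𝓝 0) := hε0.comp h2n1
    have hyeven : Tendsto (fun n => p (2 * n) iN) atTop (𝓝 (1 - c)) := by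
      have hfe : (fun n => p (2 * n) iN)
          = fun n => (1 - ε (2 * n)) - p (2 * n) i0 := by
        funext n
        have := hσ (2 * n)
        linarith
      rw [hfe]
      have h1 : Tendsto (fun n => (1 : ℝ) - ε (2 * n)) atTop (𝓝 (1 - 0)) :=
        tendsto_const_nhds.sub hεeven
      have := h1.sub hxc
      convert this using 2
      ring
    have hxodd : Tendsto (fun n => p (2 * n + 1) i0) atTop (𝓝 (1 - c)) := by
      have hfe : (fun n => p (2 * n + 1) i0)
          = fun n => (p (2 * n + 1) i0 - (1 - p (2 * n) i0)) + (1 - p (2 * n) i0) := by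
        funext n; ring
      rw [hfe]
      have h1 : Tendsto (fun n => p (2 * n + 1) i0 - (1 - p (2 * n) i0)) atTop (𝓝 0) :=
        he.comp h2n
      have h2 : Tendsto (fun n => (1 : ℝ) - p (2 * n) i0) atTop (𝓝 (1 - c)) :=
        tendsto_const_nhds.sub hxc
      have := h1.add h2
      convert this using 2
      ring
    have hyodd : Tendsto (fun n => p (2 * n + 1) iN) atTop (𝓝 c) := by
      have hfe : (fun n => p (2 * n + 1) iN)
          = fun n => (1 - ε (2 * n + 1)) - p (2 * n + 1) i0 := by
        funext n
        have := hσ (2 * n + 1)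
        linarith
      rw [hfe]
      have h1 : Tendsto (fun n => (1 : ℝ) - ε (2 * n + 1)) atTop (𝓝 (1 - 0)) :=
        tendsto_const_nhds.sub hεodd
      have := h1.sub hxodd
      convert this using 2
      ring
    have hintval : ∀ i : Fin N, 0 < i.1 → i.1 < N - 1 → i ≠ i0 ∧ i ≠ iN := by
      intro i h1 h2
      constructor
      · intro hEq; rw [hEq, hi0val] at h1; omega
      · intro hEq; rw [hEq, hiNval] at h2; omega
    exact ⟨c, hc, hxc,
      fun i h1 h2 => (hint i (hintval i h1 h2).1 (hintval i h1 h2).2).comp h2n,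
      hyeven, hxodd,
      fun i h1 h2 => (hint i (hintval i h1 h2).1 (hintval i h1 h2).2).comp h2n1,
      hyodd⟩
  rcases eq_or_lt_of_le hρnn with hρ0 | hρpos
  · -- ρ = 0 : both roots are 1/2
    have hα2 : α = 1/2 := by rw [hαdef, ← hρ0]; norm_num
    have hβ2 : β = 1/2 := by rw [hβdef, ← hρ0]; norm_num
    have hsq : Tendsto (fun n => (p n i0 - 1/2) ^ 2) atTop (𝓝 0) := by
      have hfe : (fun n => (p n i0 - 1/2) ^ 2)
          = fun n => (p n i0 - α) * (p n i0 - β) := by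
        funext n; rw [hα2, hβ2]; ring
      rw [hfe]; exact hq
    have habs : Tendsto (fun n => |p n i0 - 1/2|) atTop (𝓝 0) := by
      have h := (Real.continuous_sqrt.tendsto 0).comp hsq
      simp only [Function.comp_def, Real.sqrt_zero] at h
      have hfe : (fun n => |p n i0 - 1/2|)
          = fun n => Real.sqrt ((p n i0 - 1/2) ^ 2) := by
        funext n; rw [Real.sqrt_sq_eq_abs]
      rw [hfe]; exact h
    have hxfull : Tendsto (fun n => p n i0) atTop (𝓝 (1/2)) := by
      rw [tendsto_iff_dist_tendsto_zero]
      simpa [Real.dist_eq] using habs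
    exact ⟨1/2, ⟨by norm_num, by norm_num⟩, hxfull.comp h2n⟩
  · -- ρ > 0 : distinct roots, alternating convergence
    set d : ℕ → ℝ := fun n => min |p n i0 - α| |p n i0 - β| with hddef
    have hdnonneg : ∀ n, 0 ≤ d n := fun n => le_min (abs_nonneg _) (abs_nonneg _)
    have hd0 : Tendsto d atTop (𝓝 0) := by
      have hle : ∀ n, d n ≤ Real.sqrt |(p n i0 - α) * (p n i0 - β)| := by
        intro n
        rw [Real.le_sqrt (hdnonneg n) (abs_nonneg _), abs_mul]
        have h1 : d n ≤ |p n i0 - α| := min_le_left _ _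
        have h2 : d n ≤ |p n i0 - β| := min_le_right _ _
        nlinarith [hdnonneg n, abs_nonneg (p n i0 - α), abs_nonneg (p n i0 - β)]
      have hs : Tendsto (fun n => Real.sqrt |(p n i0 - α) * (p n i0 - β)|)
          atTop (𝓝 0) := by
        have habs0 : Tendsto (fun n => |(p n i0 - α) * (p n i0 - β)|)
            atTop (𝓝 0) := by simpa using hq.abs
        have h := (Real.continuous_sqrt.tendsto 0).comp habs0
        simpa [Function.comp_def] using h
      exact tendsto_of_tendsto_of_tendsto_of_le_of_le tendsto_const_nhds hs hdnonneg hle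
    have hρ4 : (0:ℝ) < ρ / 4 := by linarith
    have heabs : Tendsto (fun n => |p (n+1) i0 - (1 - p n i0)|) atTop (𝓝 0) := by
      simpa using he.abs
    obtain ⟨M, hM⟩ := eventually_atTop.1
      ((hd0.eventually (gt_mem_nhds hρ4)).and (heabs.eventually (gt_mem_nhds hρ4)))
    have hαβd : β - α = ρ := by rw [hαdef, hβdef]; ring
    have step : ∀ n, M ≤ n → ∀ u v : ℝ,
        ((u = α ∧ v = β) ∨ (u = β ∧ v = α)) →
        |p n i0 - u| < ρ/4 → |p (n+1) i0 - v| < ρ/4 := by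
      intro n hn u v huv h1
      obtain ⟨hdn1, -⟩ := hM (n+1) (by omega)
      obtain ⟨-, hen⟩ := hM n hn
      have huv1 : u + v = 1 := by
        rcases huv with ⟨h, h'⟩ | ⟨h, h'⟩ <;> rw [h, h'] <;> linarith
      have hu_v : |u - v| = ρ := by
        rcases huv with ⟨h, h'⟩ | ⟨h, h'⟩ <;> rw [h, h']
        · rw [abs_of_nonpos (by linarith)]; linarith
        · rw [abs_of_nonneg (by linarith)]; linarith
      have h2 : |p (n+1) i0 - v| < ρ/2 := by
        have t1 : |p (n+1) i0 - v|
            ≤ |p (n+1) i0 - (1 - p n i0)| + |(1 - p n i0) - v| :=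
          abs_sub_le _ _ _
        have t2 : |(1 - p n i0) - v| = |p n i0 - u| := by
          rw [show (1 - p n i0) - v = -(p n i0 - u) from by linarith, abs_neg]
        linarith
      rcases min_lt_iff.1 hdn1 with h4 | h4
      · -- |x(n+1) − α| < ρ/4
        rcases huv with ⟨hu, hv⟩ | ⟨hu, hv⟩
        · -- v = β : contradiction unless... derive from triangle
          exfalso
          have t3 : |u - v| ≤ |p (n+1) i0 - u| + |p (n+1) i0 - v| := by
            have := abs_sub_le u (p (n+1) i0) v
            have h5 : |u - p (n+1) i0| = |p (n+1) i0 - u| := abs_sub_comm _ _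
            linarith
          rw [← hu] at h4
          linarith [hu_v, h4, h2, t3]
        · rw [hv]; exact h4
      · rcases huv with ⟨hu, hv⟩ | ⟨hu, hv⟩
        · rw [hv]; exact h4
        · exfalso
          have t3 : |u - v| ≤ |p (n+1) i0 - u| + |p (n+1) i0 - v| := by
            have := abs_sub_le u (p (n+1) i0) v
            have h5 : |u - p (n+1) i0| = |p (n+1) i0 - u| := abs_sub_comm _ _
            linarith
          rw [← hu] at h4
          linarith [hu_v, h4, h2, t3]
    have hfinal : ∀ c : ℝ, ((c = α) ∨ (c = β)) →
        (∀ n', M ≤ n' → |p (2 * n') i0 - c| < ρ/4) →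
        Tendsto (fun n => p (2 * n) i0) atTop (𝓝 c) := by
      intro c hcαβ hev
      rw [← tendsto_sub_nhds_zero_iff]
      refine squeeze_zero_norm' ?_ (hd0.comp h2n)
      rw [eventually_atTop]
      refine ⟨M, fun n' hn' => ?_⟩
      have h1 := hev n' hn'
      have hother : ρ - ρ/4 ≤ |p (2 * n') i0 - (1 - c)| := by
        have t1 : |c - (1 - c)| ≤ |p (2 * n') i0 - c| + |p (2 * n') i0 - (1 - c)| := by
          have := abs_sub_le c (p (2 * n') i0) (1 - c)
          have h5 : |c - p (2 * n') i0| = |p (2 * n') i0 - c| := abs_sub_comm _ _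
          linarith
        have t2 : |c - (1 - c)| = ρ := by
          rcases hcαβ with h | h <;> rw [h]
          · rw [show α - (1 - α) = -(β - α) from by linarith, abs_neg,
              abs_of_nonneg (by linarith)]
            linarith
          · rw [show β - (1 - β) = β - α from by linarith,
              abs_of_nonneg (by linarith)]
            linarith
        linarith
      show ‖p (2 * n') i0 - c‖ ≤ d (2 * n')
      rw [Real.norm_eq_abs]
      have hd2 : d (2 * n') = min |p (2 * n') i0 - α| |p (2 * n') i0 - β| := rfl
      rcases hcαβ with h | h
      · rw [hd2, ← h]
        refine le_min le_rfl ?_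
        have : (1 : ℝ) - c = β := by rw [h]; linarith
        rw [← this]
        linarith
      · rw [hd2, ← h]
        refine le_min ?_ le_rfl
        have : (1 : ℝ) - c = α := by rw [h]; linarith
        rw [← this]
        linarith
    rcases min_lt_iff.1 (hM (2 * M) (by omega)).1 with hstart | hstart
    · -- converge to α on evens
      have hall : ∀ k, |p (2 * M + 2 * k) i0 - α| < ρ/4 := by
        intro k
        induction k with
        | zero => simpa using hstart
        | succ j ih =>
          have s1 := step (2*M + 2*j) (by omega) α β (Or.inl ⟨rfl, rfl⟩) ih
          have s2 := step (2*M + 2*j + 1) (by omega) β α (Or.inr ⟨rfl, rfl⟩) s1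
          have hidx : 2*M + 2*(j+1) = 2*M + 2*j + 1 + 1 := by ring
          rw [hidx]
          exact s2
      have heven : ∀ n', M ≤ n' → |p (2 * n') i0 - α| < ρ/4 := by
        intro n' hn'
        have := hall (n' - M)
        rwa [show 2*M + 2*(n' - M) = 2*n' from by omega] at this
      refine ⟨α, ⟨hαpos, by rw [hαdef]; linarith⟩,
        hfinal α (Or.inl rfl) heven⟩
    · -- converge to β on evens
      have hall : ∀ k, |p (2 * M + 2 * k) i0 - β| < ρ/4 := by
        intro k
        induction k with
        | zero => simpa using hstart
        | succ j ih =>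
          have s1 := step (2*M + 2*j) (by omega) β α (Or.inr ⟨rfl, rfl⟩) ih
          have s2 := step (2*M + 2*j + 1) (by omega) α β (Or.inl ⟨rfl, rfl⟩) s1
          have hidx : 2*M + 2*(j+1) = 2*M + 2*j + 1 + 1 := by ring
          rw [hidx]
          exact s2
      have heven : ∀ n', M ≤ n' → |p (2 * n') i0 - β| < ρ/4 := by
        intro n' hn'
        have := hall (n' - M)
        rwa [show 2*M + 2*(n' - M) = 2*n' from by omega] at this
      refine ⟨β, ⟨by rw [hβdef]; linarith, hβlt1⟩,
        hfinal β (Or.inr rfl) heven⟩
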